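/- Let G be a finite connected graph equipped with a random walk whose Ricci curvature κ(x,y) ≥ κ > 0 for all pairs of distinct vertices. Then κ ≤ 2/diam(G). Moreover, if m_x(x) = α for all x ∈ V(G), then κ ≤ (1-α)·2/diam(G). -/

import Mathlib

open Finset

/-- A probability vector on a finite set. -/
def IsProbVec {V : Type*} [Fintype V] (m : V → ℝ) : Prop :=
  (∀ x, 0 ≤ m x) ∧ ∑ x, m x = 1

/-- A coupling between two probability vectors. -/
def IsCoupling {V : Type*} [Fintype V] (m₁ m₂ : V → ℝ) (A : V → V → ℝ) : Prop :=
  (∀ x y, 0 ≤ A x y) ∧ (∀ x, ∑ y, A x y = m₁ x) ∧ (∀ y, ∑ x, A x y = m₂ y)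

/-- The L¹-Wasserstein (transportation) distance between two probability vectors,
with respect to the graph metric. -/
noncomputable def Wdist {V : Type*} [Fintype V] (G : SimpleGraph V) (m₁ m₂ : V → ℝ) : ℝ :=
  sInf {s | ∃ A : V → V → ℝ, IsCoupling m₁ m₂ A ∧
    s = ∑ x, ∑ y, A x y * (G.dist x y : ℝ)}

/-- A random walk on a graph: at each vertex a probability measure supported on
the closed neighborhood. -/
def IsRandomWalk {V : Type*} [Fintype V] (G : SimpleGraph V) (m : V → V → ℝ) : Prop :=
  ∀ x, IsProbVec (m x) ∧ ∀ y, m x y ≠ 0 → y = x ∨ G.Adj x y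

/-- Ollivier's Ricci curvature `κ(x,y) = 1 - W(m_x, m_y)/d(x,y)`. -/
noncomputable def ricci {V : Type*} [Fintype V] (G : SimpleGraph V) (m : V → V → ℝ)
    (x y : V) : ℝ :=
  1 - Wdist G (m x) (m y) / (G.dist x y : ℝ)

/-- The averaging operator `(Mf)(x) = ∑_y f(y)·m_x(y)`. -/
def Mop {V : Type*} [Fintype V] (m : V → V → ℝ) (f : V → ℝ) : V → ℝ :=
  fun x => ∑ y, f y * m x y


lemma coupling_sum_ge {V : Type*} [Fintype V] (G : SimpleGraph V) (hG : G.Connected)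
    (m₁ m₂ : V → ℝ) (h1 : ∑ u, m₁ u = 1) (A : V → V → ℝ) (hA : IsCoupling m₁ m₂ A) (x y : V) :
    (G.dist x y : ℝ) - (∑ u, m₁ u * G.dist x u) - (∑ v, m₂ v * G.dist y v) ≤
      ∑ u, ∑ v, A u v * (G.dist u v : ℝ) := by
  obtain ⟨hpos, hrow, hcol⟩ := hA
  have key : ∀ u v : V, A u v * ((G.dist x y : ℝ) - G.dist x u - G.dist y v)
      ≤ A u v * (G.dist u v : ℝ) := by
    intro u v
    apply mul_le_mul_of_nonneg_left _ (hpos u v)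
    have h1 : G.dist x y ≤ G.dist x u + G.dist u v + G.dist y v := by
      calc G.dist x y ≤ G.dist x u + G.dist u y := hG.dist_triangle
        _ ≤ G.dist x u + (G.dist u v + G.dist v y) := by
            gcongr; exact hG.dist_triangle
        _ = G.dist x u + G.dist u v + G.dist y v := by
            rw [SimpleGraph.dist_comm (u := v) (v := y)]; ring
    have := (Nat.cast_le (α := ℝ)).2 h1
    push_cast at this
    linarith
  calc (G.dist x y : ℝ) - (∑ u, m₁ u * G.dist x u) - (∑ v, m₂ v * G.dist y v)
      = ∑ u, ∑ v, A u v * ((G.dist x y : ℝ) - G.dist x u - G.dist y v) := by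
        have e1 : ∑ u, ∑ v, A u v * (G.dist x y : ℝ) = (G.dist x y : ℝ) := by
          simp_rw [← Finset.sum_mul, hrow]
          rw [h1, one_mul]

        have e2 : ∑ u, ∑ v, A u v * (G.dist x u : ℝ) = ∑ u, m₁ u * G.dist x u := by
          simp_rw [← Finset.sum_mul, hrow]
        have e3 : ∑ u, ∑ v, A u v * (G.dist y v : ℝ) = ∑ v, m₂ v * G.dist y v := by
          rw [Finset.sum_comm]
          simp_rw [← Finset.sum_mul, hcol]
        simp_rw [mul_sub, Finset.sum_sub_distrib]
        rw [e1, e2, e3]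
    _ ≤ ∑ u, ∑ v, A u v * (G.dist u v : ℝ) := by
        apply Finset.sum_le_sum; intro u _
        exact Finset.sum_le_sum fun v _ => key u v

lemma Wdist_ge {V : Type*} [Fintype V] (G : SimpleGraph V) (hG : G.Connected)
    (m₁ m₂ : V → ℝ) (h₁ : IsProbVec m₁) (h₂ : IsProbVec m₂) (x y : V) :
    (G.dist x y : ℝ) - (∑ u, m₁ u * G.dist x u) - (∑ v, m₂ v * G.dist y v) ≤
      Wdist G m₁ m₂ := by
  apply le_csInf
  · refine ⟨∑ u, ∑ v, (m₁ u * m₂ v) * (G.dist u v : ℝ), fun u v => m₁ u * m₂ v,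
      ⟨fun u v => mul_nonneg (h₁.1 u) (h₂.1 v), fun u => ?_, fun v => ?_⟩, rfl⟩
    · rw [← Finset.mul_sum, h₂.2, mul_one]
    · rw [← Finset.sum_mul, h₁.2, one_mul]
  · rintro s ⟨A, hA, rfl⟩
    exact coupling_sum_ge G hG m₁ m₂ h₁.2 A hA x y

lemma expect_le {V : Type*} [Fintype V] (G : SimpleGraph V) (mx : V → ℝ) (x : V)
    (hprob : IsProbVec mx) (hsupp : ∀ y, mx y ≠ 0 → y = x ∨ G.Adj x y) :
    ∑ u, mx u * (G.dist x u : ℝ) ≤ 1 - mx x := by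
  classical
  have h : ∑ u, mx u * (G.dist x u : ℝ) ≤ ∑ u ∈ Finset.univ.erase x, mx u := by
    have he : ∑ u, mx u * (G.dist x u : ℝ)
        = ∑ u ∈ Finset.univ.erase x, mx u * (G.dist x u : ℝ) :=
      (Finset.sum_erase _ (by simp)).symm
    rw [he]
    apply Finset.sum_le_sum
    intro u hu
    rcases eq_or_ne (mx u) 0 with h0 | h0
    · simp [h0]
    · rcases hsupp u h0 with rfl | hadj
      · simp at hu
      · rw [(G.dist_eq_one_iff_adj).2 hadj]
        simp
  calc ∑ u, mx u * (G.dist x u : ℝ) ≤ ∑ u ∈ Finset.univ.erase x, mx u := h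
    _ = (∑ u, mx u) - mx x := by rw [Finset.sum_erase_eq_sub (by simp)]
    _ = 1 - mx x := by rw [hprob.2]

/-- On a finite connected graph with at least two vertices whose
Ricci curvature is at least `κ > 0`, we have `κ ≤ 2/diam(G)`; moreover if `m_x(x) = α`
for all `x`, then `κ ≤ (1-α)·2/diam(G)`. -/
theorem ricci_le_two_div_diam {V : Type*} [Fintype V] [Nontrivial V] (G : SimpleGraph V)
    (hG : G.Connected) (m : V → V → ℝ) (hm : IsRandomWalk G m)
    (κ : ℝ) (hκpos : 0 < κ) (hκ : ∀ x y : V, x ≠ y → κ ≤ ricci G m x y) :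
    κ ≤ 2 / (G.diam : ℝ) ∧
      ∀ α : ℝ, (∀ x : V, m x x = α) → κ ≤ (1 - α) * (2 / (G.diam : ℝ)) := by
  classical
  -- diam is nonzero
  have hnetop : G.ediam ≠ ⊤ := by
    obtain ⟨u, v, huv⟩ := G.exists_edist_eq_ediam_of_finite
    rw [← huv]
    exact SimpleGraph.edist_ne_top_iff_reachable.mpr (hG u v)
  have hd0 : G.diam ≠ 0 := by
    rw [Ne, SimpleGraph.diam_eq_zero]
    push_neg
    exact ⟨hnetop, ‹Nontrivial V›⟩
  obtain ⟨x, y, hxy⟩ := G.exists_dist_eq_diam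
  have hne : x ≠ y := by
    rintro rfl
    rw [SimpleGraph.dist_self] at hxy
    exact hd0 hxy.symm
  have hD : (0:ℝ) < (G.dist x y : ℝ) := by
    have : 0 < G.dist x y := by
      rw [hxy]; exact Nat.pos_of_ne_zero hd0
    exact_mod_cast this
  have hx := expect_le G (m x) x (hm x).1 (hm x).2
  have hy := expect_le G (m y) y (hm y).1 (hm y).2
  have hW := Wdist_ge G hG (m x) (m y) (hm x).1 (hm y).1 x y
  have hWle : Wdist G (m x) (m y) ≤ (1 - κ) * (G.dist x y : ℝ) := by
    have h := hκ x y hne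
    unfold ricci at h
    have : Wdist G (m x) (m y) / (G.dist x y : ℝ) ≤ 1 - κ := by linarith
    calc Wdist G (m x) (m y) = Wdist G (m x) (m y) / (G.dist x y : ℝ) * (G.dist x y : ℝ) := by
          field_simp
      _ ≤ (1 - κ) * (G.dist x y : ℝ) := by
          exact mul_le_mul_of_nonneg_right this hD.le
  have hmain : κ * (G.dist x y : ℝ) ≤ 2 - m x x - m y y := by nlinarith
  have hDd : (G.dist x y : ℝ) = (G.diam : ℝ) := by exact_mod_cast hxy
  have hmx0 : 0 ≤ m x x := (hm x).1.1 x
  have hmy0 : 0 ≤ m y y := (hm y).1.1 y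
  constructor
  · rw [← hDd, le_div_iff₀ hD]
    linarith
  · intro α hα
    rw [show (1 - α) * (2 / (G.diam : ℝ)) = (1 - α) * 2 / (G.diam : ℝ) by ring,
      ← hDd, le_div_iff₀ hD]
    have h1 := hα x
    have h2 := hα y
    nlinarith
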